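/- For all i, j ∈ {1,2,3,4}: (1/(4√G))·[G_{ij} − G_i·G_j/(2G)] = (1 − 2δ_{ij})·√G/(8 y_i y_j) (no summation); i.e., the fundamental metrical d-tensor of the rheonomic Berwald–Moór metric equals g_{ij} = (1 − 2δ_{ij})·√G/(8 y_i y_j). -/

import Mathlib

/-- For all `i, j`:
`(1/(4√G))·[G_{ij} − G_i·G_j/(2G)] = (1 − 2δ_{ij})·√G/(8 y_i y_j)`,
i.e. the fundamental metrical d-tensor of the rheonomic Berwald–Moór metric is
`g_{ij} = (1 − 2δ_{ij})·√G/(8 y_i y_j)`. -/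
theorem berwald_moor_fundamental_tensor
    (y : Fin 4 → ℝ) (hy : ∀ i, 0 < y i)
    (G : ℝ) (hG : G = ∏ i, y i)
    (Gi : Fin 4 → ℝ) (hGi : ∀ i, Gi i = G / y i)
    (Gij : Fin 4 → Fin 4 → ℝ)
    (hGij : ∀ i j, Gij i j =
      (1 - (if i = j then (1 : ℝ) else 0)) * G / (y i * y j)) :
    ∀ i j, (1 / (4 * Real.sqrt G)) * (Gij i j - Gi i * Gi j / (2 * G))
      = (1 - 2 * (if i = j then (1 : ℝ) else 0)) * Real.sqrt G / (8 * y i * y j) := by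
  intro i j
  have hGpos : 0 < G := by
    rw [hG]; exact Finset.prod_pos (fun i _ => hy i)
  have hs : 0 < Real.sqrt G := Real.sqrt_pos.mpr hGpos
  have hsq : Real.sqrt G * Real.sqrt G = G := Real.mul_self_sqrt hGpos.le
  rw [hGij, hGi, hGi]
  have hyi := (hy i).ne'
  have hyj := (hy j).ne'
  field_simp
  by_cases h : i = j
  · simp only [h, if_true]
    linear_combination 8 * hsq
  · simp only [h, if_false]
    linear_combination (-8) * hsq
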